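/- Single-crossing equal-mass comparison inequality: Let f : [0,1]² → (0, ∞) be continuous with F(a,b) := ∫_0^a ∫_0^b f(v,w) dw dv, and suppose the inverse conditional anti-hazard rate h(a,b) := (∫_0^a f(v,b) dv)/f(a,b) is strictly increasing in a and non-decreasing in b. Let ẑ_1, ẑ_2 : [0,1] → [0,1] be non-decreasing functions and a* ∈ (0,1) be such that ẑ_2(a) ≥ ẑ_1(a) for all a ≤ a*, ẑ_1(a) ≥ ẑ_2(a) for all a ≥ a*, the set {a : ẑ_1(a) ≠ ẑ_2(a)} has positive Lebesgue measure, and the masses below the two curves are equal: ∫_0^1 ∫_0^{ẑ_1(a)} f(a,b) db da = ∫_0^1 ∫_0^{ẑ_2(a)} f(a,b) db da. Then ∫_0^1 F(a, ẑ_1(a)) da > ∫_0^1 F(a, ẑ_2(a)) da. -/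
import Mathlib


/- Single-crossing equal-mass comparison inequality (Fact 2). -/

open Set MeasureTheory intervalIntegral

noncomputable section

def square : Set (ℝ × ℝ) := Icc (0:ℝ) 1 ×ˢ Icc (0:ℝ) 1

/-- The cumulative distribution `F(a,b) = ∫₀^a ∫₀^b f`. -/
def Fcdf (f : ℝ × ℝ → ℝ) (a b : ℝ) : ℝ :=
  ∫ v in (0:ℝ)..a, ∫ w in (0:ℝ)..b, f (v, w)

/-- The inverse conditional anti-hazard rate
`h(a,b) = (∫₀^a f(v,b) dv) / f(a,b)`. -/
def antihazA (f : ℝ × ℝ → ℝ) (a b : ℝ) : ℝ :=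
  (∫ v in (0:ℝ)..a, f (v, b)) / f (a, b)



def cl (x : ℝ) : ℝ := min 1 (max 0 x)

lemma cl_mem (x : ℝ) : cl x ∈ Icc (0:ℝ) 1 :=
  ⟨le_min zero_le_one (le_max_left _ _), min_le_left _ _⟩

lemma cl_of_mem {x : ℝ} (hx : x ∈ Icc (0:ℝ) 1) : cl x = x := by
  simp [cl, max_eq_right hx.1, min_eq_right hx.2]

lemma cl_mono : Monotone cl := fun x y h => min_le_min le_rfl (max_le_max le_rfl h)

lemma cont_slice {f : ℝ × ℝ → ℝ} (hfc : Continuous f) (a : ℝ) :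
    Continuous fun w => ∫ v in (0:ℝ)..a, f (v, w) := by
  have : Continuous (Function.uncurry fun (w v : ℝ) => f (v, w)) :=
    hfc.comp (continuous_snd.prodMk continuous_fst)
  exact intervalIntegral.continuous_parametric_intervalIntegral_of_continuous' this 0 a

lemma cont_phi {f : ℝ × ℝ → ℝ} (hfc : Continuous f) :
    Continuous fun p : ℝ × ℝ => ∫ w in (0:ℝ)..p.2, f (p.1, w) := by
  have : Continuous (Function.uncurry fun (a w : ℝ) => f (a, w)) := hfc
  exact intervalIntegral.continuous_parametric_primitive_of_continuous this

lemma fswap {f : ℝ × ℝ → ℝ} (hfc : Continuous f) {a b : ℝ} (ha : 0 ≤ a) (hb : 0 ≤ b) :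
    (∫ v in (0:ℝ)..a, ∫ w in (0:ℝ)..b, f (v, w))
      = ∫ w in (0:ℝ)..b, ∫ v in (0:ℝ)..a, f (v, w) := by
  have hint : Integrable (Function.uncurry fun v w => f (v, w))
      ((volume.restrict (Ioc 0 a)).prod (volume.restrict (Ioc 0 b))) := by
    rw [Measure.prod_restrict]
    have : IntegrableOn f (Icc 0 a ×ˢ Icc 0 b) volume :=
      hfc.continuousOn.integrableOn_compact (isCompact_Icc.prod isCompact_Icc)
    exact this.mono_set (prod_mono Ioc_subset_Icc_self Ioc_subset_Icc_self)
  rw [integral_of_le ha, integral_of_le hb]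
  simp_rw [integral_of_le hb, integral_of_le ha]
  exact MeasureTheory.integral_integral_swap hint

lemma monoF {f : ℝ × ℝ → ℝ} (hfc : Continuous f) (hfpos : ∀ p, 0 < f p) {z : ℝ → ℝ}
    (hm : MonotoneOn z (Icc (0:ℝ) 1)) (hr : MapsTo z (Icc (0:ℝ) 1) (Icc (0:ℝ) 1)) :
    MonotoneOn (fun a => Fcdf f a (z a)) (Icc (0:ℝ) 1) := by
  have hGc : ∀ b : ℝ, Continuous fun v => ∫ w in (0:ℝ)..b, f (v, w) := fun b =>
    intervalIntegral.continuous_parametric_intervalIntegral_of_continuous'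
      (μ := volume) (f := fun v w => f (v, w)) hfc 0 b
  intro x hx y hy hxy
  have step1 : Fcdf f x (z x) ≤ Fcdf f y (z x) := by
    simp only [Fcdf]
    apply intervalIntegral.integral_mono_interval le_rfl hx.1 hxy
    · exact Filter.Eventually.of_forall fun v =>
        intervalIntegral.integral_nonneg (hr hx).1 fun u _ => (hfpos _).le
    · exact (hGc _).intervalIntegrable _ _
  have step2 : Fcdf f y (z x) ≤ Fcdf f y (z y) := by
    simp only [Fcdf]
    apply intervalIntegral.integral_mono_on hy.1
      ((hGc (z x)).intervalIntegrable 0 y) ((hGc (z y)).intervalIntegrable 0 y)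
    intro v _
    apply intervalIntegral.integral_mono_interval le_rfl (hr hx).1 (hm hx hy hxy)
    · exact Filter.Eventually.of_forall fun w => (hfpos _).le
    · exact (hfc.comp (continuous_const.prodMk continuous_id)).intervalIntegrable _ _
  exact step1.trans step2

lemma intM {f : ℝ × ℝ → ℝ} (hfc : Continuous f) {z : ℝ → ℝ} (hm : Monotone z)
    (hr : MapsTo z (Icc (0:ℝ) 1) (Icc (0:ℝ) 1)) :
    IntervalIntegrable (fun a => ∫ w in (0:ℝ)..(z a), f (a, w)) volume 0 1 := by
  rw [intervalIntegrable_iff_integrableOn_Ioc_of_le zero_le_one]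
  have hΦc : Continuous fun p : ℝ × ℝ => ∫ w in (0:ℝ)..p.2, f (p.1, w) := cont_phi hfc
  have hmeas : Measurable fun a => ∫ w in (0:ℝ)..(z a), f (a, w) := by
    have h1 : Measurable fun a : ℝ => ((a, z a) : ℝ × ℝ) :=
      measurable_id.prodMk hm.measurable
    have h2 : (fun a => ∫ w in (0:ℝ)..(z a), f (a, w))
        = (fun p : ℝ × ℝ => ∫ w in (0:ℝ)..p.2, f (p.1, w)) ∘ (fun a => (a, z a)) := rfl
    rw [h2]
    exact hΦc.measurable.comp h1
  obtain ⟨C, hC⟩ := (isCompact_Icc.prod (isCompact_Icc (a := (0:ℝ))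
    (b := 1))).exists_bound_of_continuousOn hΦc.continuousOn
  apply Measure.integrableOn_of_bounded (M := C) measure_Ioc_lt_top.ne
    hmeas.aestronglyMeasurable
  filter_upwards [ae_restrict_mem measurableSet_Ioc] with a ha
  have haI : a ∈ Icc (0:ℝ) 1 := Ioc_subset_Icc_self ha
  exact hC (a, z a) ⟨haI, hr haI⟩

theorem aux
    (f : ℝ × ℝ → ℝ)
    (hfc : Continuous f) (hfpos : ∀ p, 0 < f p)
    (hhazA : ∀ b ∈ Icc (0:ℝ) 1,
      StrictMonoOn (fun a => antihazA f a b) (Icc (0:ℝ) 1))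
    (hhazB : ∀ a ∈ Icc (0:ℝ) 1,
      MonotoneOn (fun b => antihazA f a b) (Icc (0:ℝ) 1))
    (z1 z2 : ℝ → ℝ)
    (hm1 : Monotone z1) (hm2 : Monotone z2)
    (hr1 : MapsTo z1 (Icc (0:ℝ) 1) (Icc (0:ℝ) 1))
    (hr2 : MapsTo z2 (Icc (0:ℝ) 1) (Icc (0:ℝ) 1))
    (astar : ℝ) (hstar : astar ∈ Ioo (0:ℝ) 1)
    (hbefore : ∀ a ∈ Icc (0:ℝ) 1, a ≤ astar → z1 a ≤ z2 a)
    (hafter : ∀ a ∈ Icc (0:ℝ) 1, astar ≤ a → z2 a ≤ z1 a)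
    (hdiff : 0 < volume {a ∈ Icc (0:ℝ) 1 | z1 a ≠ z2 a})
    (hmassEq : (∫ a in (0:ℝ)..1, ∫ b in (0:ℝ)..(z1 a), f (a, b))
      = ∫ a in (0:ℝ)..1, ∫ b in (0:ℝ)..(z2 a), f (a, b)) :
    (∫ a in (0:ℝ)..1, Fcdf f a (z2 a)) < ∫ a in (0:ℝ)..1, Fcdf f a (z1 a) := by
  have hstarI : astar ∈ Icc (0:ℝ) 1 := ⟨hstar.1.le, hstar.2.le⟩
  set bstar := z1 astar with hbstar
  have hzstar : z2 astar = bstar :=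
    le_antisymm (hafter astar hstarI le_rfl) (hbefore astar hstarI le_rfl)
  have hbI : bstar ∈ Icc (0:ℝ) 1 := hr1 hstarI
  set c := antihazA f astar bstar with hc
  set Q : ℝ → ℝ → ℝ := fun a w => (∫ v in (0:ℝ)..a, f (v, w)) - c * f (a, w) with hQ
  have hQeq : ∀ a w, Q a w = (antihazA f a w - c) * f (a, w) := by
    intro a w
    have h0 : f (a, w) ≠ 0 := (hfpos _).ne'
    simp only [hQ, antihazA, sub_mul, div_mul_cancel₀ _ h0]
  have hQcont : ∀ a, Continuous (Q a) := by
    intro a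
    exact (cont_slice hfc a).sub (continuous_const.mul
      (hfc.comp ((continuous_const (y := a)).prodMk continuous_id)))
  -- pointwise sign facts
  have Qnp : ∀ a ∈ Icc (0:ℝ) 1, a ≤ astar → ∀ w ∈ Icc (0:ℝ) 1, w ≤ bstar → Q a w ≤ 0 := by
    intro a ha hale w hw hwb
    have h1 : antihazA f a w ≤ antihazA f astar w :=
      (hhazA w hw).monotoneOn ha hstarI hale
    have h2 : antihazA f astar w ≤ c := hhazB astar hstarI hw hbI hwb
    rw [hQeq]
    exact mul_nonpos_iff.2 (Or.inr ⟨sub_nonpos.2 (h1.trans h2), (hfpos _).le⟩)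
  have Qsn : ∀ a ∈ Icc (0:ℝ) 1, a < astar → ∀ w ∈ Icc (0:ℝ) 1, w ≤ bstar → Q a w < 0 := by
    intro a ha hale w hw hwb
    have h1 : antihazA f a w < antihazA f astar w := hhazA w hw ha hstarI hale
    have h2 : antihazA f astar w ≤ c := hhazB astar hstarI hw hbI hwb
    rw [hQeq]
    exact mul_neg_of_neg_of_pos (sub_neg.2 (h1.trans_le h2)) (hfpos _)
  have Qnn : ∀ a ∈ Icc (0:ℝ) 1, astar ≤ a → ∀ w ∈ Icc (0:ℝ) 1, bstar ≤ w → 0 ≤ Q a w := by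
    intro a ha hale w hw hwb
    have h2 : c ≤ antihazA f astar w := hhazB astar hstarI hbI hw hwb
    have h1 : antihazA f astar w ≤ antihazA f a w :=
      (hhazA w hw).monotoneOn hstarI ha hale
    rw [hQeq]
    exact mul_nonneg (sub_nonneg.2 (h2.trans h1)) (hfpos _).le
  have Qsp : ∀ a ∈ Icc (0:ℝ) 1, astar < a → ∀ w ∈ Icc (0:ℝ) 1, bstar ≤ w → 0 < Q a w := by
    intro a ha hale w hw hwb
    have h2 : c ≤ antihazA f astar w := hhazB astar hstarI hbI hw hwb
    have h1 : antihazA f astar w < antihazA f a w := hhazA w hw hstarI ha hale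
    rw [hQeq]
    exact mul_pos (sub_pos.2 (h2.trans_lt h1)) (hfpos _)
  set S : ℝ → ℝ := fun a => ∫ w in (z2 a)..(z1 a), Q a w with hS
  have Snn : ∀ a ∈ Icc (0:ℝ) 1, 0 ≤ S a := by
    intro a ha
    rcases le_total a astar with hle | hle
    · have h12 : z1 a ≤ z2 a := hbefore a ha hle
      have h2 : 0 ≤ ∫ w in (z1 a)..(z2 a), -Q a w := by
        apply intervalIntegral.integral_nonneg h12
        intro u hu
        have huI : u ∈ Icc (0:ℝ) 1 := ⟨(hr1 ha).1.trans hu.1, hu.2.trans (hr2 ha).2⟩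
        have hub : u ≤ bstar := hu.2.trans (le_of_le_of_eq (hm2 hle) hzstar)
        exact neg_nonneg.2 (Qnp a ha hle u huI hub)
      rw [intervalIntegral.integral_neg] at h2
      have hsym : S a = -∫ w in (z1 a)..(z2 a), Q a w :=
        intervalIntegral.integral_symm (z1 a) (z2 a)
      rw [hsym]
      linarith
    · have h21 : z2 a ≤ z1 a := hafter a ha hle
      apply intervalIntegral.integral_nonneg h21
      intro u hu
      have huI : u ∈ Icc (0:ℝ) 1 := ⟨(hr2 ha).1.trans hu.1, hu.2.trans (hr1 ha).2⟩
      have hub : bstar ≤ u := le_trans (le_of_eq hzstar.symm) ((hm2 hle).trans hu.1)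
      exact Qnn a ha hle u huI hub
  have Spos : ∀ a ∈ Icc (0:ℝ) 1, z1 a ≠ z2 a → 0 < S a := by
    intro a ha hne
    rcases lt_trichotomy a astar with hlt | heq | hlt
    · have h12 : z1 a < z2 a := lt_of_le_of_ne (hbefore a ha hlt.le) hne
      have hpos : 0 < ∫ w in (z1 a)..(z2 a), -Q a w := by
        apply intervalIntegral_pos_of_pos_on ((hQcont a).neg.intervalIntegrable _ _)
        · intro w hw
          have hwI : w ∈ Icc (0:ℝ) 1 := ⟨(hr1 ha).1.trans hw.1.le, hw.2.le.trans (hr2 ha).2⟩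
          have hwb : w ≤ bstar := hw.2.le.trans (le_of_le_of_eq (hm2 hlt.le) hzstar)
          exact neg_pos.2 (Qsn a ha hlt w hwI hwb)
        · exact h12
      rw [intervalIntegral.integral_neg] at hpos
      have hsym : S a = -∫ w in (z1 a)..(z2 a), Q a w :=
        intervalIntegral.integral_symm (z1 a) (z2 a)
      rw [hsym]
      linarith
    · exfalso
      subst heq
      exact hne hzstar.symm
    · have h21 : z2 a < z1 a := lt_of_le_of_ne (hafter a ha hlt.le) (Ne.symm hne)
      apply intervalIntegral_pos_of_pos_on ((hQcont a).intervalIntegrable _ _)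
      · intro w hw
        have hwI : w ∈ Icc (0:ℝ) 1 := ⟨(hr2 ha).1.trans hw.1.le, hw.2.le.trans (hr1 ha).2⟩
        have hwb : bstar ≤ w := le_trans (le_of_eq hzstar.symm) ((hm2 hlt.le).trans hw.1.le)
        exact Qsp a ha hlt w hwI hwb
      · exact h21
  set M1 : ℝ → ℝ := fun a => ∫ w in (0:ℝ)..(z1 a), f (a, w) with hM1
  set M2 : ℝ → ℝ := fun a => ∫ w in (0:ℝ)..(z2 a), f (a, w) with hM2
  have Sdec : ∀ a ∈ Icc (0:ℝ) 1,
      S a = (Fcdf f a (z1 a) - c * M1 a) - (Fcdf f a (z2 a) - c * M2 a) := by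
    intro a ha
    have e1 : ∀ z : ℝ, 0 ≤ z → (∫ w in (0:ℝ)..z, Q a w)
        = Fcdf f a z - c * ∫ w in (0:ℝ)..z, f (a, w) := by
      intro z hz
      have hgint : IntervalIntegrable (fun w => ∫ v in (0:ℝ)..a, f (v, w)) volume 0 z :=
        (cont_slice hfc a).intervalIntegrable _ _
      have hfint : IntervalIntegrable (fun w => c * f (a, w)) volume 0 z :=
        (continuous_const.mul (hfc.comp (continuous_const.prodMk
          continuous_id))).intervalIntegrable _ _
      have : (∫ w in (0:ℝ)..z, Q a w) = (∫ w in (0:ℝ)..z, ∫ v in (0:ℝ)..a, f (v, w))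
          - ∫ w in (0:ℝ)..z, c * f (a, w) := intervalIntegral.integral_sub hgint hfint
      rw [this, intervalIntegral.integral_const_mul, ← fswap hfc ha.1 hz]
      rfl
    have isub : (∫ w in (0:ℝ)..(z1 a), Q a w) - (∫ w in (0:ℝ)..(z2 a), Q a w)
        = ∫ w in (z2 a)..(z1 a), Q a w :=
      intervalIntegral.integral_interval_sub_left
        ((hQcont a).intervalIntegrable _ _) ((hQcont a).intervalIntegrable _ _)
    have : S a = (∫ w in (0:ℝ)..(z1 a), Q a w) - (∫ w in (0:ℝ)..(z2 a), Q a w) := isub.symm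
    rw [this, e1 _ (hr1 ha).1, e1 _ (hr2 ha).1]
  have iF1 : IntervalIntegrable (fun a => Fcdf f a (z1 a)) volume 0 1 := by
    apply MonotoneOn.intervalIntegrable
    rw [uIcc_of_le zero_le_one]
    exact monoF hfc hfpos (hm1.monotoneOn _) hr1
  have iF2 : IntervalIntegrable (fun a => Fcdf f a (z2 a)) volume 0 1 := by
    apply MonotoneOn.intervalIntegrable
    rw [uIcc_of_le zero_le_one]
    exact monoF hfc hfpos (hm2.monotoneOn _) hr2
  have iM1 : IntervalIntegrable M1 volume 0 1 := intM hfc hm1 hr1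
  have iM2 : IntervalIntegrable M2 volume 0 1 := intM hfc hm2 hr2
  have key : (∫ a in (0:ℝ)..1, S a)
      = (∫ a in (0:ℝ)..1, Fcdf f a (z1 a)) - ∫ a in (0:ℝ)..1, Fcdf f a (z2 a) := by
    have h1 : (∫ a in (0:ℝ)..1, S a) = ∫ a in (0:ℝ)..1,
        ((Fcdf f a (z1 a) - c * M1 a) - (Fcdf f a (z2 a) - c * M2 a)) := by
      apply intervalIntegral.integral_congr
      intro a ha
      rw [uIcc_of_le zero_le_one] at ha
      exact Sdec a ha
    rw [h1, intervalIntegral.integral_sub (iF1.sub (iM1.const_mul c))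
      (iF2.sub (iM2.const_mul c)),
      intervalIntegral.integral_sub iF1 (iM1.const_mul c),
      intervalIntegral.integral_sub iF2 (iM2.const_mul c)]
    have hcm : (∫ a in (0:ℝ)..1, c * M1 a) = ∫ a in (0:ℝ)..1, c * M2 a := by
      rw [intervalIntegral.integral_const_mul, intervalIntegral.integral_const_mul]
      simp only [hM1, hM2]
      rw [hmassEq]
    rw [hcm]; ring
  have hSpos : 0 < ∫ a in (0:ℝ)..1, S a := by
    have iS : IntervalIntegrable S volume 0 1 := by
      have icomb : IntervalIntegrable (fun a =>
          (Fcdf f a (z1 a) - c * M1 a) - (Fcdf f a (z2 a) - c * M2 a)) volume 0 1 :=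
        (iF1.sub (iM1.const_mul c)).sub (iF2.sub (iM2.const_mul c))
      rw [intervalIntegrable_iff_integrableOn_Ioc_of_le zero_le_one] at icomb ⊢
      exact icomb.congr_fun (fun a ha => (Sdec a (Ioc_subset_Icc_self ha)).symm)
        measurableSet_Ioc
    apply (intervalIntegral.integral_pos_iff_support_of_nonneg_ae' ?_ iS).2
    · refine ⟨zero_lt_one, ?_⟩
      have hsub : {a | a ∈ Icc (0:ℝ) 1 ∧ z1 a ≠ z2 a} \ {0}
          ⊆ Function.support S ∩ Ioc 0 1 := by
        rintro a ⟨⟨haI, hne⟩, h0⟩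
        have h0' : a ≠ 0 := by simpa using h0
        exact ⟨(Spos a haI hne).ne', lt_of_le_of_ne haI.1 (Ne.symm h0'), haI.2⟩
      refine lt_of_lt_of_le ?_ (measure_mono hsub)
      rwa [measure_diff_null (measure_singleton 0)]
    · rw [uIoc_of_le (zero_le_one (α := ℝ))]
      filter_upwards [ae_restrict_mem measurableSet_Ioc] with a ha
      exact Snn a (Ioc_subset_Icc_self ha)
  linarith [key, hSpos]

lemma cl_cont : Continuous cl := continuous_const.min (continuous_const.max continuous_id)

theorem single_crossing_equal_mass_comparison
    (f : ℝ × ℝ → ℝ)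
    (hfc : ContinuousOn f square) (hfpos : ∀ p ∈ square, 0 < f p)
    (hhazA : ∀ b ∈ Icc (0:ℝ) 1,
      StrictMonoOn (fun a => antihazA f a b) (Icc (0:ℝ) 1))
    (hhazB : ∀ a ∈ Icc (0:ℝ) 1,
      MonotoneOn (fun b => antihazA f a b) (Icc (0:ℝ) 1))
    (z1 z2 : ℝ → ℝ)
    (hm1 : MonotoneOn z1 (Icc (0:ℝ) 1)) (hm2 : MonotoneOn z2 (Icc (0:ℝ) 1))
    (hr1 : MapsTo z1 (Icc (0:ℝ) 1) (Icc (0:ℝ) 1))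
    (hr2 : MapsTo z2 (Icc (0:ℝ) 1) (Icc (0:ℝ) 1))
    (astar : ℝ) (hstar : astar ∈ Ioo (0:ℝ) 1)
    (hbefore : ∀ a ∈ Icc (0:ℝ) 1, a ≤ astar → z1 a ≤ z2 a)
    (hafter : ∀ a ∈ Icc (0:ℝ) 1, astar ≤ a → z2 a ≤ z1 a)
    (hdiff : 0 < volume {a ∈ Icc (0:ℝ) 1 | z1 a ≠ z2 a})
    (hmassEq : (∫ a in (0:ℝ)..1, ∫ b in (0:ℝ)..(z1 a), f (a, b))
      = ∫ a in (0:ℝ)..1, ∫ b in (0:ℝ)..(z2 a), f (a, b)) :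
    (∫ a in (0:ℝ)..1, Fcdf f a (z2 a)) < ∫ a in (0:ℝ)..1, Fcdf f a (z1 a) := by
  set F : ℝ × ℝ → ℝ := fun p => f (cl p.1, cl p.2) with hF
  set Z1 : ℝ → ℝ := fun a => z1 (cl a) with hZ1
  set Z2 : ℝ → ℝ := fun a => z2 (cl a) with hZ2
  have clsq : ∀ p : ℝ × ℝ, ((cl p.1, cl p.2) : ℝ × ℝ) ∈ square :=
    fun p => ⟨cl_mem _, cl_mem _⟩
  have hFc : Continuous F :=
    hfc.comp_continuous ((cl_cont.comp continuous_fst).prodMk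
      (cl_cont.comp continuous_snd)) clsq
  have hFpos : ∀ p, 0 < F p := fun p => hfpos _ (clsq p)
  have hFsq : ∀ a b : ℝ, a ∈ Icc (0:ℝ) 1 → b ∈ Icc (0:ℝ) 1 → F (a, b) = f (a, b) := by
    intro a b ha hb
    simp only [hF, cl_of_mem ha, cl_of_mem hb]
  have antih_eq : ∀ a ∈ Icc (0:ℝ) 1, ∀ b ∈ Icc (0:ℝ) 1,
      antihazA F a b = antihazA f a b := by
    intro a ha b hb
    unfold antihazA
    rw [hFsq a b ha hb]
    congr 1
    apply intervalIntegral.integral_congr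
    intro v hv
    rw [uIcc_of_le ha.1] at hv
    exact hFsq v b ⟨hv.1, hv.2.trans ha.2⟩ hb
  have hhazA' : ∀ b ∈ Icc (0:ℝ) 1,
      StrictMonoOn (fun a => antihazA F a b) (Icc (0:ℝ) 1) := by
    intro b hb x hx y hy hxy
    simp only
    rw [antih_eq x hx b hb, antih_eq y hy b hb]
    exact hhazA b hb hx hy hxy
  have hhazB' : ∀ a ∈ Icc (0:ℝ) 1,
      MonotoneOn (fun b => antihazA F a b) (Icc (0:ℝ) 1) := by
    intro a ha x hx y hy hxy
    simp only
    rw [antih_eq a ha x hx, antih_eq a ha y hy]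
    exact hhazB a ha hx hy hxy
  have hZ1m : Monotone Z1 := fun x y h => hm1 (cl_mem x) (cl_mem y) (cl_mono h)
  have hZ2m : Monotone Z2 := fun x y h => hm2 (cl_mem x) (cl_mem y) (cl_mono h)
  have hZr1 : MapsTo Z1 (Icc (0:ℝ) 1) (Icc (0:ℝ) 1) := fun a _ => hr1 (cl_mem a)
  have hZr2 : MapsTo Z2 (Icc (0:ℝ) 1) (Icc (0:ℝ) 1) := fun a _ => hr2 (cl_mem a)
  have Zeq1 : ∀ a ∈ Icc (0:ℝ) 1, Z1 a = z1 a := by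
    intro a ha; simp only [hZ1, cl_of_mem ha]
  have Zeq2 : ∀ a ∈ Icc (0:ℝ) 1, Z2 a = z2 a := by
    intro a ha; simp only [hZ2, cl_of_mem ha]
  have hbefore' : ∀ a ∈ Icc (0:ℝ) 1, a ≤ astar → Z1 a ≤ Z2 a := by
    intro a ha h; rw [Zeq1 a ha, Zeq2 a ha]; exact hbefore a ha h
  have hafter' : ∀ a ∈ Icc (0:ℝ) 1, astar ≤ a → Z2 a ≤ Z1 a := by
    intro a ha h; rw [Zeq1 a ha, Zeq2 a ha]; exact hafter a ha h
  have hdiff' : 0 < volume {a ∈ Icc (0:ℝ) 1 | Z1 a ≠ Z2 a} := by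
    have hset : {a ∈ Icc (0:ℝ) 1 | Z1 a ≠ Z2 a} = {a ∈ Icc (0:ℝ) 1 | z1 a ≠ z2 a} := by
      ext a
      simp only [mem_setOf_eq]
      constructor
      · rintro ⟨ha, hne⟩; exact ⟨ha, by rwa [Zeq1 a ha, Zeq2 a ha] at hne⟩
      · rintro ⟨ha, hne⟩; exact ⟨ha, by rw [Zeq1 a ha, Zeq2 a ha]; exact hne⟩
    rw [hset]
    exact hdiff
  have innercong : ∀ (z : ℝ → ℝ), MapsTo z (Icc (0:ℝ) 1) (Icc (0:ℝ) 1) →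
      ∀ a ∈ Icc (0:ℝ) 1, (∫ b in (0:ℝ)..(z a), F (a, b)) = ∫ b in (0:ℝ)..(z a), f (a, b) := by
    intro z hz a ha
    apply intervalIntegral.integral_congr
    intro b hb
    rw [uIcc_of_le (hz ha).1] at hb
    exact hFsq a b ha ⟨hb.1, hb.2.trans (hz ha).2⟩
  have hmass' : (∫ a in (0:ℝ)..1, ∫ b in (0:ℝ)..(Z1 a), F (a, b))
      = ∫ a in (0:ℝ)..1, ∫ b in (0:ℝ)..(Z2 a), F (a, b) := by
    have t1 : (∫ a in (0:ℝ)..1, ∫ b in (0:ℝ)..(Z1 a), F (a, b))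
        = ∫ a in (0:ℝ)..1, ∫ b in (0:ℝ)..(z1 a), f (a, b) := by
      apply intervalIntegral.integral_congr
      intro a ha
      rw [uIcc_of_le zero_le_one] at ha
      simp only [Zeq1 a ha]
      exact innercong z1 hr1 a ha
    have t2 : (∫ a in (0:ℝ)..1, ∫ b in (0:ℝ)..(Z2 a), F (a, b))
        = ∫ a in (0:ℝ)..1, ∫ b in (0:ℝ)..(z2 a), f (a, b) := by
      apply intervalIntegral.integral_congr
      intro a ha
      rw [uIcc_of_le zero_le_one] at ha
      simp only [Zeq2 a ha]
      exact innercong z2 hr2 a ha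
    rw [t1, t2]
    exact hmassEq
  have main := aux F hFc hFpos hhazA' hhazB' Z1 Z2 hZ1m hZ2m hZr1 hZr2 astar hstar
    hbefore' hafter' hdiff' hmass'
  have Fcdfeq : ∀ a ∈ Icc (0:ℝ) 1, ∀ b ∈ Icc (0:ℝ) 1, Fcdf F a b = Fcdf f a b := by
    intro a ha b hb
    unfold Fcdf
    apply intervalIntegral.integral_congr
    intro v hv
    rw [uIcc_of_le ha.1] at hv
    apply intervalIntegral.integral_congr
    intro w hw
    rw [uIcc_of_le hb.1] at hw
    exact hFsq v w ⟨hv.1, hv.2.trans ha.2⟩ ⟨hw.1, hw.2.trans hb.2⟩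
  have c1 : (∫ a in (0:ℝ)..1, Fcdf F a (Z1 a)) = ∫ a in (0:ℝ)..1, Fcdf f a (z1 a) := by
    apply intervalIntegral.integral_congr
    intro a ha
    rw [uIcc_of_le zero_le_one] at ha
    simp only [Zeq1 a ha]
    exact Fcdfeq a ha (z1 a) (hr1 ha)
  have c2 : (∫ a in (0:ℝ)..1, Fcdf F a (Z2 a)) = ∫ a in (0:ℝ)..1, Fcdf f a (z2 a) := by
    apply intervalIntegral.integral_congr
    intro a ha
    rw [uIcc_of_le zero_le_one] at ha
    simp only [Zeq2 a ha]
    exact Fcdfeq a ha (z2 a) (hr2 ha)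
  rwa [c1, c2] at main
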